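/- Let Φ be a completely positive linear map between matrix algebras. For 0 ≤ α ≤ 1 and positive definite A, B with Φ(A), Φ(B) positive definite, Φ(G_α(A,B)) ≤ G_α(Φ(A), Φ(B)), where G_α(A,B) = B^{1/2}(B^{-1/2} A B^{-1/2})^α B^{1/2} is the weighted geometric mean. -/

import Mathlib

open Matrix
open scoped ComplexOrder Classical

/-- Square root of a positive semidefinite matrix, extended by `0`. -/
noncomputable def msqrt {n : Type*} [Fintype n] [DecidableEq n] (A : Matrix n n ℂ) :
    Matrix n n ℂ :=
  if h : A.PosSemidef then (h.1.eigenvectorUnitary : Matrix n n ℂ) *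
    diagonal (((↑) : ℝ → ℂ) ∘ Real.sqrt ∘ h.1.eigenvalues) *
    (star h.1.eigenvectorUnitary : Matrix n n ℂ) else 0

/-- Real power of a Hermitian matrix via the functional calculus, extended by `0`. -/
noncomputable def mrpow {n : Type*} [Fintype n] [DecidableEq n] (A : Matrix n n ℂ) (α : ℝ) :
    Matrix n n ℂ :=
  if h : A.IsHermitian then h.cfc (fun t => t ^ α) else 0

/-- A completely positive linear map between matrix algebras (Choi–Kraus form). -/
def IsCPMap {n m : Type*} [Fintype n] [Fintype m] (Φ : Matrix n n ℂ → Matrix m m ℂ) : Prop :=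
  ∃ (r : ℕ) (C : Fin r → Matrix n m ℂ), ∀ X, Φ X = ∑ i, (C i)ᴴ * X * C i

/-- The matrix geometric mean `A^{1/2} (A^{-1/2} B A^{-1/2})^{1/2} A^{1/2}`. -/
noncomputable def geomMean {n : Type*} [Fintype n] [DecidableEq n] (A B : Matrix n n ℂ) :
    Matrix n n ℂ :=
  msqrt A * msqrt ((msqrt A)⁻¹ * B * (msqrt A)⁻¹) * msqrt A

/-- The weighted geometric mean `B^{1/2} (B^{-1/2} A B^{-1/2})^α B^{1/2}`. -/
noncomputable def wgeomMean {n : Type*} [Fintype n] [DecidableEq n] (α : ℝ)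
    (A B : Matrix n n ℂ) : Matrix n n ℂ :=
  msqrt B * mrpow ((msqrt B)⁻¹ * A * (msqrt B)⁻¹) α * msqrt B

/-- The harmonic mean `2 (A⁻¹ + B⁻¹)⁻¹`. -/
noncomputable def harmMean {n : Type*} [Fintype n] [DecidableEq n] (A B : Matrix n n ℂ) :
    Matrix n n ℂ :=
  (2 : ℂ) • (A⁻¹ + B⁻¹)⁻¹

namespace CPAux

variable {n : Type*} [Fintype n] [DecidableEq n]

section cfc

variable {A : Matrix n n ℂ} (hA : A.IsHermitian)

lemma unit_of_unitary : IsUnit ((hA.eigenvectorUnitary : Matrix n n ℂ)) := by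
  have h := Matrix.mem_unitaryGroup_iff.mp (SetLike.coe_mem hA.eigenvectorUnitary)
  exact @isUnit_of_invertible _ _ _ (invertibleOfRightInverse _ _ h)

lemma cfc_herm (f : ℝ → ℝ) : (hA.cfc f).IsHermitian := by
  rw [Matrix.IsHermitian.cfc, Unitary.conjStarAlgAut_apply, Matrix.star_eq_conjTranspose]
  exact Matrix.isHermitian_mul_mul_conjTranspose _
    (Matrix.isHermitian_diagonal_of_self_adjoint _ (funext fun i => by simp))

lemma cfc_mul (f g : ℝ → ℝ) :
    hA.cfc f * hA.cfc g = hA.cfc (fun t => f t * g t) := by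
  rw [Matrix.IsHermitian.cfc, Matrix.IsHermitian.cfc, Matrix.IsHermitian.cfc]
  simp only [Unitary.conjStarAlgAut_apply]
  have h1 : (star hA.eigenvectorUnitary : Matrix n n ℂ) * (hA.eigenvectorUnitary : Matrix n n ℂ)
      = 1 := Unitary.star_mul_self_of_mem (SetLike.coe_mem _)
  have h2 : ∀ a b c d e f : Matrix n n ℂ, (a * b * c) * (d * e * f) = a * (b * (c * d) * e) * f := by
    intros; simp only [mul_assoc]
  rw [h2, h1, mul_one, diagonal_mul_diagonal]
  have h3 : (fun i => (RCLike.ofReal ∘ f ∘ hA.eigenvalues) i * (RCLike.ofReal ∘ g ∘ hA.eigenvalues) i)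
      = (RCLike.ofReal ∘ (fun t => f t * g t) ∘ hA.eigenvalues : n → ℂ) := funext fun i => by simp
  rw [h3]

lemma cfc_one : hA.cfc (fun _ => 1) = 1 := by
  rw [Matrix.IsHermitian.cfc]
  have : (RCLike.ofReal ∘ (fun _ : ℝ => (1:ℝ)) ∘ hA.eigenvalues : n → ℂ) = fun _ => 1 :=
    funext fun i => by simp
  rw [this, diagonal_one, Unitary.conjStarAlgAut_apply, mul_one, Unitary.mul_star_self_of_mem (SetLike.coe_mem _)]

lemma cfc_id' : hA.cfc (fun t => t) = A := by
  rw [Matrix.IsHermitian.cfc]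
  exact hA.spectral_theorem.symm

lemma cfc_congr {f g : ℝ → ℝ} (h : ∀ i, f (hA.eigenvalues i) = g (hA.eigenvalues i)) :
    hA.cfc f = hA.cfc g := by
  rw [Matrix.IsHermitian.cfc, Matrix.IsHermitian.cfc]
  have h3 : (RCLike.ofReal ∘ f ∘ hA.eigenvalues : n → ℂ)
      = (RCLike.ofReal ∘ g ∘ hA.eigenvalues : n → ℂ) := funext fun i => by simp [h i]
  rw [h3]

lemma cfc_posSemidef {f : ℝ → ℝ} (h : ∀ i, 0 ≤ f (hA.eigenvalues i)) :
    (hA.cfc f).PosSemidef := by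
  rw [Matrix.IsHermitian.cfc, Unitary.conjStarAlgAut_apply, Matrix.star_eq_conjTranspose]
  refine Matrix.PosSemidef.mul_mul_conjTranspose_same ?_ _
  refine posSemidef_diagonal_iff.mpr fun i => ?_
  simpa using Complex.zero_le_real.mpr (h i)

lemma posDef_conj {A M : Matrix n n ℂ} (hA : A.PosDef) (hM : IsUnit M) :
    (M * A * Mᴴ).PosDef := by
  refine Matrix.PosDef.of_dotProduct_mulVec_pos ?_ (fun x hx => ?_)
  · have h := hA.1.eq
    unfold Matrix.IsHermitian
    simp only [star_eq_conjTranspose, conjTranspose_mul, conjTranspose_conjTranspose, h]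
    rw [mul_assoc]
  · have hMH : IsUnit Mᴴ := by
      rw [Matrix.isUnit_iff_isUnit_det] at hM ⊢
      rw [Matrix.det_conjTranspose]
      exact hM.star
    have hy : Mᴴ *ᵥ x ≠ 0 := by
      have hinj := Matrix.mulVec_injective_iff_isUnit.mpr hMH
      intro h
      exact hx (hinj (by simpa using h))
    have key : star x ⬝ᵥ (M * A * Mᴴ) *ᵥ x = star (Mᴴ *ᵥ x) ⬝ᵥ A *ᵥ (Mᴴ *ᵥ x) := by
      rw [star_mulVec, conjTranspose_conjTranspose, ← Matrix.mulVec_mulVec,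
        ← Matrix.mulVec_mulVec, Matrix.dotProduct_mulVec (star x)]
    rw [key]
    exact hA.dotProduct_mulVec_pos hy

lemma cfc_posDef {A : Matrix n n ℂ} (hA : A.PosDef) {f : ℝ → ℝ}
    (h : ∀ i, 0 < f (hA.1.eigenvalues i)) : (hA.1.cfc f).PosDef := by
  rw [Matrix.IsHermitian.cfc, Unitary.conjStarAlgAut_apply, Matrix.star_eq_conjTranspose]
  exact posDef_conj (Matrix.PosDef.diagonal fun i => by simpa using Complex.zero_lt_real.mpr (h i))
    (unit_of_unitary hA.1)

end cfc

section rpow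

variable {A : Matrix n n ℂ}

lemma mrpow_eq (hA : A.IsHermitian) (α : ℝ) : mrpow A α = hA.cfc (fun t => t ^ α) :=
  dif_pos hA

lemma mrpow_herm (hA : A.IsHermitian) (α : ℝ) : (mrpow A α).IsHermitian := by
  rw [mrpow_eq hA]; exact cfc_herm hA _

lemma mrpow_posDef (hA : A.PosDef) (α : ℝ) : (mrpow A α).PosDef := by
  rw [mrpow_eq hA.1]
  exact cfc_posDef hA fun i => Real.rpow_pos_of_pos (hA.eigenvalues_pos i) _

lemma mrpow_mul_mrpow (hA : A.PosDef) (a b : ℝ) :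
    mrpow A a * mrpow A b = mrpow A (a + b) := by
  rw [mrpow_eq hA.1, mrpow_eq hA.1, mrpow_eq hA.1, cfc_mul]
  exact cfc_congr hA.1 fun i => (Real.rpow_add (hA.eigenvalues_pos i) _ _).symm

lemma mrpow_zero (hA : A.IsHermitian) : mrpow A 0 = 1 := by
  rw [mrpow_eq hA, cfc_congr hA (g := fun _ => 1) (fun i => Real.rpow_zero _), cfc_one]

lemma mrpow_one (hA : A.IsHermitian) : mrpow A 1 = A := by
  rw [mrpow_eq hA, cfc_congr hA (g := fun t => t) (fun i => Real.rpow_one _), cfc_id']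

noncomputable def _root_.Matrix.PosSemidef.sqrt (hA : A.PosSemidef) : Matrix n n ℂ :=
  hA.1.cfc Real.sqrt

lemma _root_.Matrix.PosSemidef.posSemidef_sqrt (hA : A.PosSemidef) : hA.sqrt.PosSemidef :=
  cfc_posSemidef hA.1 fun _ => Real.sqrt_nonneg _

lemma _root_.Matrix.PosSemidef.sqrt_mul_self (hA : A.PosSemidef) : hA.sqrt * hA.sqrt = A := by
  rw [Matrix.PosSemidef.sqrt, cfc_mul, cfc_congr hA.1 (g := fun t => t)
    (fun i => Real.mul_self_sqrt (hA.eigenvalues_nonneg i)), cfc_id']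

open scoped MatrixOrder in
lemma _root_.Matrix.PosSemidef.eq_sqrt_of_sq_eq {B : Matrix n n ℂ} (hA : A.PosSemidef)
    (hB : B.PosSemidef) (h : A ^ 2 = B) : A = hB.sqrt := by
  have hA0 : 0 ≤ A := Matrix.nonneg_iff_posSemidef.mpr hA
  have hB0 : 0 ≤ B := Matrix.nonneg_iff_posSemidef.mpr hB
  rw [Matrix.PosSemidef.sqrt, ← hB.1.cfc_eq Real.sqrt, ← cfcₙ_eq_cfc (hf0 := Real.sqrt_zero),
    ← CFC.sqrt_eq_real_sqrt B hB0]
  exact (CFC.sqrt_unique (by rw [← pow_two, h]) hA0).symm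

lemma msqrt_eq (hA : A.PosSemidef) : msqrt A = hA.sqrt := dif_pos hA

lemma msqrt_posSemidef (hA : A.PosSemidef) : (msqrt A).PosSemidef := by
  rw [msqrt_eq hA]; exact hA.posSemidef_sqrt

lemma msqrt_mul_self (hA : A.PosSemidef) : msqrt A * msqrt A = A := by
  rw [msqrt_eq hA]; exact hA.sqrt_mul_self

lemma mrpow_half (hA : A.PosDef) : mrpow A (1/2 : ℝ) = msqrt A := by
  rw [msqrt_eq hA.posSemidef]
  refine Matrix.PosSemidef.eq_sqrt_of_sq_eq ?_ hA.posSemidef ?_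
  · rw [mrpow_eq hA.1]
    exact cfc_posSemidef hA.1 fun i => Real.rpow_nonneg (hA.eigenvalues_pos i).le _
  · rw [pow_two, mrpow_mul_mrpow hA]
    norm_num
    exact mrpow_one hA.1

lemma msqrt_posDef (hA : A.PosDef) : (msqrt A).PosDef := by
  rw [← mrpow_half hA]; exact mrpow_posDef hA _

lemma mrpow_neg_eq_inv (hA : A.PosDef) (a : ℝ) : (mrpow A a)⁻¹ = mrpow A (-a) := by
  refine Matrix.inv_eq_left_inv ?_
  rw [mrpow_mul_mrpow hA, neg_add_cancel, mrpow_zero hA.1]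

end rpow

section geom

variable {A B : Matrix n n ℂ}

lemma isUnit_det_of_posDef (hA : A.PosDef) : IsUnit A.det :=
  Matrix.isUnit_iff_isUnit_det _ |>.mp hA.isUnit

lemma inv_herm_of_herm (hA : A.IsHermitian) : (A⁻¹).IsHermitian := hA.inv

lemma sandwich_posDef (hA : A.PosDef) (hB : B.PosDef) :
    ((msqrt B)⁻¹ * A * (msqrt B)⁻¹).PosDef := by
  have hS := msqrt_posDef hB
  have h : (msqrt B)⁻¹ * A * (msqrt B)⁻¹ = (msqrt B)⁻¹ * A * ((msqrt B)⁻¹)ᴴ := by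
    rw [hS.1.inv.eq]
  rw [h]
  exact posDef_conj hA hS.inv.isUnit

lemma sandwich_inv_one (hB : B.PosDef) : (msqrt B)⁻¹ * B * (msqrt B)⁻¹ = 1 := by
  have hS := msqrt_posDef hB
  have hd := isUnit_det_of_posDef hS
  calc (msqrt B)⁻¹ * B * (msqrt B)⁻¹
      = (msqrt B)⁻¹ * (msqrt B * msqrt B) * (msqrt B)⁻¹ := by
        rw [msqrt_mul_self hB.posSemidef]
    _ = 1 := by
        rw [Matrix.nonsing_inv_mul_cancel_left _ _ hd, Matrix.mul_nonsing_inv _ hd]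

lemma conj_sandwich_cancel (hB : B.PosDef) (X : Matrix n n ℂ) :
    msqrt B * ((msqrt B)⁻¹ * X * (msqrt B)⁻¹) * msqrt B = X := by
  have hd := isUnit_det_of_posDef (msqrt_posDef hB)
  rw [Matrix.mul_assoc ((msqrt B)⁻¹) X ((msqrt B)⁻¹), Matrix.mul_nonsing_inv_cancel_left _ _ hd,
    Matrix.nonsing_inv_mul_cancel_right _ _ hd]

lemma geomMean_posDef (hA : A.PosDef) (hB : B.PosDef) : (geomMean A B).PosDef := by
  have hT := msqrt_posDef (sandwich_posDef hB hA)
  have hS := msqrt_posDef hA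
  have h : geomMean A B = msqrt A * msqrt ((msqrt A)⁻¹ * B * (msqrt A)⁻¹) * (msqrt A)ᴴ := by
    rw [hS.1.eq]; rfl
  rw [h]
  exact posDef_conj hT hS.isUnit

lemma geomMean_herm (hA : A.PosDef) (hB : B.PosDef) : (geomMean A B).IsHermitian :=
  (geomMean_posDef hA hB).1

lemma inv_eq_sqrtinv_mul_sqrtinv (hA : A.PosDef) : A⁻¹ = (msqrt A)⁻¹ * (msqrt A)⁻¹ := by
  conv_lhs => rw [← msqrt_mul_self hA.posSemidef]
  rw [Matrix.mul_inv_rev]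

lemma geomMean_riccati (hA : A.PosDef) (hB : B.PosDef) :
    geomMean A B * A⁻¹ * geomMean A B = B := by
  have hd := isUnit_det_of_posDef (msqrt_posDef hA)
  have hT : msqrt ((msqrt A)⁻¹ * B * (msqrt A)⁻¹) * msqrt ((msqrt A)⁻¹ * B * (msqrt A)⁻¹)
      = (msqrt A)⁻¹ * B * (msqrt A)⁻¹ := msqrt_mul_self (sandwich_posDef hB hA).posSemidef
  rw [inv_eq_sqrtinv_mul_sqrtinv hA]
  unfold geomMean
  set S := msqrt A
  set T := msqrt (S⁻¹ * B * S⁻¹)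
  calc S * T * S * (S⁻¹ * S⁻¹) * (S * T * S)
      = S * (T * ((S * S⁻¹) * (S⁻¹ * S)) * T) * S := by simp only [Matrix.mul_assoc]
    _ = S * (T * T) * S := by
        rw [Matrix.mul_nonsing_inv _ hd, Matrix.nonsing_inv_mul _ hd, one_mul, mul_one]
    _ = B := by rw [hT, conj_sandwich_cancel hA]

lemma eq_geomMean_of_riccati (hA : A.PosDef) (hB : B.PosDef) {X : Matrix n n ℂ}
    (hX : X.PosDef) (h : X * A⁻¹ * X = B) : X = geomMean A B := by
  have hd := isUnit_det_of_posDef (msqrt_posDef hA)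
  set S := msqrt A with hSdef
  have hT' : (S⁻¹ * X * S⁻¹).PosDef := sandwich_posDef hX hA
  have hsq : (S⁻¹ * X * S⁻¹) ^ 2 = S⁻¹ * B * S⁻¹ := by
    rw [pow_two]
    calc S⁻¹ * X * S⁻¹ * (S⁻¹ * X * S⁻¹)
        = S⁻¹ * (X * (S⁻¹ * S⁻¹) * X) * S⁻¹ := by simp only [Matrix.mul_assoc]
      _ = S⁻¹ * (X * A⁻¹ * X) * S⁻¹ := by rw [← inv_eq_sqrtinv_mul_sqrtinv hA,
            ← Matrix.mul_assoc, ← Matrix.mul_assoc]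
      _ = S⁻¹ * B * S⁻¹ := by rw [h, Matrix.mul_assoc, ← Matrix.mul_assoc]
  have hBc : (S⁻¹ * B * S⁻¹).PosSemidef := (sandwich_posDef hB hA).posSemidef
  have := hT'.posSemidef.eq_sqrt_of_sq_eq hBc hsq
  rw [← msqrt_eq hBc] at this
  have hX' : X = S * (S⁻¹ * X * S⁻¹) * S := (conj_sandwich_cancel hA X).symm
  rw [hX', this]
  rfl

lemma geomMean_conj (hA : A.PosDef) (hB : B.PosDef) {M : Matrix n n ℂ} (hM : IsUnit M) :
    geomMean (M * A * Mᴴ) (M * B * Mᴴ) = M * geomMean A B * Mᴴ := by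
  have hMd : IsUnit M.det := (Matrix.isUnit_iff_isUnit_det _).mp hM
  have hMH : IsUnit Mᴴ.det := by rw [Matrix.det_conjTranspose]; exact hMd.star
  have hA' : (M * A * Mᴴ).PosDef := posDef_conj hA hM
  have hB' : (M * B * Mᴴ).PosDef := posDef_conj hB hM
  have hG := geomMean_posDef hA hB
  refine (eq_geomMean_of_riccati hA' hB' (posDef_conj hG hM) ?_).symm
  have hinv : (M * A * Mᴴ)⁻¹ = (Mᴴ)⁻¹ * A⁻¹ * M⁻¹ := by
    rw [Matrix.mul_inv_rev, Matrix.mul_inv_rev, Matrix.mul_assoc]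
  rw [hinv]
  calc M * geomMean A B * Mᴴ * ((Mᴴ)⁻¹ * A⁻¹ * M⁻¹) * (M * geomMean A B * Mᴴ)
      = M * (geomMean A B * ((Mᴴ * (Mᴴ)⁻¹) * A⁻¹ * (M⁻¹ * M)) * geomMean A B) * Mᴴ := by
        simp only [Matrix.mul_assoc]
    _ = M * (geomMean A B * A⁻¹ * geomMean A B) * Mᴴ := by
        rw [Matrix.mul_nonsing_inv _ hMH, Matrix.nonsing_inv_mul _ hMd, one_mul, mul_one,
          ← Matrix.mul_assoc, ← Matrix.mul_assoc]
    _ = M * B * Mᴴ := by rw [geomMean_riccati hA hB]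

end geom

section wgeom

variable {A B : Matrix n n ℂ}

lemma wgeom_def (α : ℝ) :
    wgeomMean α A B = msqrt B * mrpow ((msqrt B)⁻¹ * A * (msqrt B)⁻¹) α * msqrt B := rfl

lemma wgeom_posDef (hA : A.PosDef) (hB : B.PosDef) (α : ℝ) : (wgeomMean α A B).PosDef := by
  have hC := sandwich_posDef hA hB
  have hS := msqrt_posDef hB
  have h : wgeomMean α A B
      = msqrt B * mrpow ((msqrt B)⁻¹ * A * (msqrt B)⁻¹) α * (msqrt B)ᴴ := by
    rw [hS.1.eq]; rfl
  rw [h]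
  exact posDef_conj (mrpow_posDef hC α) hS.isUnit

lemma wgeom_zero (hA : A.PosDef) (hB : B.PosDef) : wgeomMean 0 A B = B := by
  rw [wgeom_def, mrpow_zero (sandwich_posDef hA hB).1, mul_one, msqrt_mul_self hB.posSemidef]

lemma wgeom_one (hA : A.PosDef) (hB : B.PosDef) : wgeomMean 1 A B = A := by
  rw [wgeom_def, mrpow_one (sandwich_posDef hA hB).1, conj_sandwich_cancel hB]

lemma geomMean_mrpow (hC : (C' : Matrix n n ℂ).PosDef) (β γ : ℝ) :
    geomMean (mrpow C' β) (mrpow C' γ) = mrpow C' ((β + γ)/2) := by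
  refine (eq_geomMean_of_riccati (mrpow_posDef hC β) (mrpow_posDef hC γ)
    (mrpow_posDef hC _) ?_).symm
  rw [mrpow_neg_eq_inv hC, mrpow_mul_mrpow hC, mrpow_mul_mrpow hC,
    show (β + γ)/2 + -β + (β + γ)/2 = γ by ring]

lemma wgeom_midpoint (hA : A.PosDef) (hB : B.PosDef) (β γ : ℝ) :
    wgeomMean ((β + γ)/2) A B = geomMean (wgeomMean β A B) (wgeomMean γ A B) := by
  have hC := sandwich_posDef hA hB
  have hS := msqrt_posDef hB
  set S := msqrt B with hSdef
  set C' := S⁻¹ * A * S⁻¹ with hC'def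
  have hconj : ∀ δ : ℝ, wgeomMean δ A B = S * mrpow C' δ * Sᴴ := fun δ => by
    rw [wgeom_def, hS.1.eq]
  rw [hconj β, hconj γ, geomMean_conj (mrpow_posDef hC β) (mrpow_posDef hC γ) hS.isUnit,
    geomMean_mrpow hC, ← hconj]

end wgeom

section core

variable {T W D : Matrix n n ℂ}

lemma smul_one_conj (hT : T.IsHermitian) (r : ℂ) :
    (hT.eigenvectorUnitary : Matrix n n ℂ) * (r • 1) *
      (star hT.eigenvectorUnitary : Matrix n n ℂ) = r • 1 := by
  rw [mul_smul_comm, mul_one, smul_mul_assoc,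
    Unitary.mul_star_self_of_mem (SetLike.coe_mem _)]

lemma smul_one_sub_psd (hT : T.IsHermitian) {r : ℝ} (h : ∀ i, hT.eigenvalues i ≤ r) :
    ((r : ℂ) • 1 - T).PosSemidef := by
  have hsp := hT.spectral_theorem
  rw [Unitary.conjStarAlgAut_apply] at hsp
  have h1 := smul_one_conj hT (r : ℂ)
  have key : (r : ℂ) • 1 - T
      = (hT.eigenvectorUnitary : Matrix n n ℂ)
        * ((r : ℂ) • 1 - diagonal (RCLike.ofReal ∘ hT.eigenvalues))
        * (star hT.eigenvectorUnitary : Matrix n n ℂ) := by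
    rw [mul_sub, sub_mul, h1, ← hsp]
  rw [key, Matrix.star_eq_conjTranspose]
  refine Matrix.PosSemidef.mul_mul_conjTranspose_same ?_ _
  have hdiag : (r : ℂ) • (1 : Matrix n n ℂ) - diagonal (RCLike.ofReal ∘ hT.eigenvalues)
      = diagonal (fun i => ((r - hT.eigenvalues i : ℝ) : ℂ)) := by
    rw [← diagonal_one, ← diagonal_smul, diagonal_sub]
    congr 1
    funext i
    push_cast
    simp
  rw [hdiag]
  exact posSemidef_diagonal_iff.mpr fun i => by
    simpa using Complex.zero_le_real.mpr (sub_nonneg.mpr (h i))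

lemma sub_smul_one_psd (hT : T.IsHermitian) {r : ℝ} (h : ∀ i, r ≤ hT.eigenvalues i) :
    (T - (r : ℂ) • 1).PosSemidef := by
  have hsp := hT.spectral_theorem
  rw [Unitary.conjStarAlgAut_apply] at hsp
  have h1 := smul_one_conj hT (r : ℂ)
  have key : T - (r : ℂ) • 1
      = (hT.eigenvectorUnitary : Matrix n n ℂ)
        * (diagonal (RCLike.ofReal ∘ hT.eigenvalues) - (r : ℂ) • 1)
        * (star hT.eigenvectorUnitary : Matrix n n ℂ) := by
    rw [mul_sub, sub_mul, h1, ← hsp]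
  rw [key, Matrix.star_eq_conjTranspose]
  refine Matrix.PosSemidef.mul_mul_conjTranspose_same ?_ _
  have hdiag : diagonal (RCLike.ofReal ∘ hT.eigenvalues) - (r : ℂ) • (1 : Matrix n n ℂ)
      = diagonal (fun i => ((hT.eigenvalues i - r : ℝ) : ℂ)) := by
    rw [← diagonal_one, ← diagonal_smul, diagonal_sub]
    congr 1
    funext i
    push_cast
    simp
  rw [hdiag]
  exact posSemidef_diagonal_iff.mpr fun i => by
    simpa using Complex.zero_le_real.mpr (sub_nonneg.mpr (h i))

end core

section sqrtmono

variable {W D : Matrix n n ℂ}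

lemma le_msqrt_of_sq_le (hW : W.IsHermitian) (hD : D.PosDef)
    (h : (D - W * W).PosSemidef) : (msqrt D - W).PosSemidef := by
  set F : ℝ → Matrix n n ℂ := fun a => mrpow D a with hFdef
  have hFmul : ∀ a b : ℝ, F a * F b = F (a + b) := fun a b => mrpow_mul_mrpow hD a b
  have hF0 : F 0 = 1 := mrpow_zero hD.1
  have hFh : ∀ a : ℝ, (F a).IsHermitian := fun a => mrpow_herm hD.1 a
  have hFpd : ∀ a : ℝ, (F a).PosDef := fun a => mrpow_posDef hD a
  set T : Matrix n n ℂ := F (-4⁻¹) * W * F (-4⁻¹) with hTdef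
  have hT : T.IsHermitian := by
    have h4 := (hFh (-4⁻¹)).eq
    show Tᴴ = T
    rw [hTdef]
    rw [conjTranspose_mul, conjTranspose_mul, h4, hW.eq, Matrix.mul_assoc]
  -- eigenvalues of T are at most 1
  have heig : ∀ i, hT.eigenvalues i ≤ 1 := by
    intro i
    set μ : ℝ := hT.eigenvalues i with hμ
    set v : n → ℂ := ⇑(hT.eigenvectorBasis i) with hv
    have hv0 : v ≠ 0 := by simpa [hv] using hT.eigenvectorBasis.orthonormal.ne_zero i
    have hTv : T *ᵥ v = μ • v := hT.mulVec_eigenvectorBasis i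
    set w : n → ℂ := F (-4⁻¹) *ᵥ v with hw
    set u : n → ℂ := F 4⁻¹ *ᵥ v with hu
    have hWw : W *ᵥ w = μ • u := by
      have hcomm : W * F (-4⁻¹) = F 4⁻¹ * T := by
        rw [hTdef]
        calc W * F (-4⁻¹) = 1 * W * F (-4⁻¹) := by rw [one_mul]
          _ = (F 4⁻¹ * F (-4⁻¹)) * W * F (-4⁻¹) := by
              rw [hFmul, show (4⁻¹ : ℝ) + -4⁻¹ = 0 by ring, hF0]
          _ = F 4⁻¹ * (F (-4⁻¹) * W * F (-4⁻¹)) := by simp only [Matrix.mul_assoc]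
      rw [hw, Matrix.mulVec_mulVec, hcomm, ← Matrix.mulVec_mulVec, hTv, Matrix.mulVec_smul]
    have hu0 : u ≠ 0 := by
      intro h0
      have hinj := Matrix.mulVec_injective_iff_isUnit.mpr (hFpd 4⁻¹).isUnit
      apply hv0
      have : F 4⁻¹ *ᵥ v = F 4⁻¹ *ᵥ 0 := by rw [Matrix.mulVec_zero, ← hu, h0]
      exact hinj this
    have hFw : F 2⁻¹ *ᵥ w = u := by
      rw [hw, Matrix.mulVec_mulVec, hFmul, hu, show (2⁻¹ : ℝ) + -4⁻¹ = 4⁻¹ by ring]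
    -- dot product computations
    have hermdot : ∀ (M : Matrix n n ℂ) (hM : M.IsHermitian) (x : n → ℂ),
        star x ⬝ᵥ (M * M) *ᵥ x = star (M *ᵥ x) ⬝ᵥ (M *ᵥ x) := by
      intro M hM x
      rw [← Matrix.mulVec_mulVec, Matrix.dotProduct_mulVec, star_mulVec, hM.eq]
    have h1 : star w ⬝ᵥ (W * W) *ᵥ w = (μ ^ 2 : ℝ) • (star u ⬝ᵥ u) := by
      rw [hermdot W hW w, hWw, star_smul, star_trivial, smul_dotProduct, dotProduct_smul,
        smul_smul, ← sq]
    have h2 : star w ⬝ᵥ D *ᵥ w = star u ⬝ᵥ u := by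
      have hDF : D = F 2⁻¹ * F 2⁻¹ := by
        rw [hFmul, show (2⁻¹ : ℝ) + 2⁻¹ = 1 by ring]; exact (mrpow_one hD.1).symm
      conv_lhs => rw [hDF]
      rw [hermdot (F 2⁻¹) (hFh 2⁻¹) w, hFw]
    have h3 : (0 : ℂ) ≤ star w ⬝ᵥ (D - W * W) *ᵥ w := h.dotProduct_mulVec_nonneg w
    rw [Matrix.sub_mulVec, dotProduct_sub, h1, h2] at h3
    have hc : (0 : ℂ) < star u ⬝ᵥ u := Matrix.dotProduct_star_self_pos_iff.mpr hu0
    set c : ℂ := star u ⬝ᵥ u with hcdef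
    have hcre : 0 < c.re := (Complex.lt_def.mp hc).1
    have hcim : c.im = 0 := ((Complex.lt_def.mp hc).2).symm
    have h4 : (μ ^ 2) * c.re ≤ c.re := by
      have h5 := (Complex.le_def.mp (sub_nonneg.mp h3)).1
      rw [Complex.real_smul, Complex.mul_re, Complex.ofReal_re, Complex.ofReal_im, hcim] at h5
      simpa using h5
    have h6 : μ ^ 2 ≤ 1 := le_of_mul_le_mul_right (by linarith) hcre
    nlinarith
  have honeT : ((1 : ℂ) • (1 : Matrix n n ℂ) - T).PosSemidef := by
    simpa using smul_one_sub_psd hT (r := 1) heig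
  rw [one_smul] at honeT
  have hkey : msqrt D - W = F 4⁻¹ * (1 - T) * F 4⁻¹ := by
    have e1 : F 4⁻¹ * 1 * F 4⁻¹ = msqrt D := by
      rw [mul_one, hFmul, show (4⁻¹ : ℝ) + 4⁻¹ = 1/2 by norm_num]; exact mrpow_half hD
    have e2 : F 4⁻¹ * T * F 4⁻¹ = W := by
      rw [hTdef]
      calc F 4⁻¹ * (F (-4⁻¹) * W * F (-4⁻¹)) * F 4⁻¹
          = (F 4⁻¹ * F (-4⁻¹)) * W * (F (-4⁻¹) * F 4⁻¹) := by simp only [Matrix.mul_assoc]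
        _ = W := by
            rw [hFmul, hFmul, show (4⁻¹ : ℝ) + -4⁻¹ = 0 by ring,
              show (-4⁻¹ : ℝ) + 4⁻¹ = 0 by ring, hF0, one_mul, mul_one]
    rw [mul_sub, sub_mul, e1, e2]
  rw [hkey]
  have := honeT.mul_mul_conjTranspose_same (F 4⁻¹)
  rwa [(hFh 4⁻¹).eq] at this

end sqrtmono

section blocks

variable {P Q Z : Matrix n n ℂ}

lemma conj_herm_of_herm {S X : Matrix n n ℂ} (hS : S.IsHermitian) (hX : X.IsHermitian) :
    (S * X * S).IsHermitian := by
  show (S * X * S)ᴴ = S * X * S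
  rw [conjTranspose_mul, conjTranspose_mul, hS.eq, hX.eq, Matrix.mul_assoc]

lemma block_geomMean_posSemidef (hP : P.PosDef) (hQ : Q.PosDef) :
    (fromBlocks P (geomMean P Q) (geomMean P Q) Q).PosSemidef := by
  set S := msqrt P with hSdef
  set G := geomMean P Q with hGdef
  have hSpd := msqrt_posDef hP
  have hd := isUnit_det_of_posDef hSpd
  have hG := geomMean_herm hP hQ
  have key : fromBlocks P G G Q
      = (fromBlocks S (S⁻¹ * G) 0 0)ᴴ * fromBlocks S (S⁻¹ * G) 0 0 := by
    rw [fromBlocks_conjTranspose, fromBlocks_multiply]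
    have e11 : Sᴴ * S + 0ᴴ * 0 = P := by
      rw [conjTranspose_zero, mul_zero, add_zero, hSpd.1.eq, msqrt_mul_self hP.posSemidef]
    have e12 : Sᴴ * (S⁻¹ * G) + 0ᴴ * 0 = G := by
      rw [conjTranspose_zero, mul_zero, add_zero, hSpd.1.eq,
        Matrix.mul_nonsing_inv_cancel_left _ _ hd]
    have e21 : (S⁻¹ * G)ᴴ * S + 0ᴴ * 0 = G := by
      rw [conjTranspose_zero, mul_zero, add_zero, conjTranspose_mul, hG.eq, hSpd.1.inv.eq,
        Matrix.nonsing_inv_mul_cancel_right _ _ hd]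
    have e22 : (S⁻¹ * G)ᴴ * (S⁻¹ * G) + 0ᴴ * 0 = Q := by
      rw [conjTranspose_zero, mul_zero, add_zero, conjTranspose_mul, hG.eq, hSpd.1.inv.eq]
      calc G * S⁻¹ * (S⁻¹ * G) = G * (S⁻¹ * S⁻¹) * G := by simp only [Matrix.mul_assoc]
        _ = G * P⁻¹ * G := by rw [← inv_eq_sqrtinv_mul_sqrtinv hP]
        _ = Q := geomMean_riccati hP hQ
    rw [e11, e12, e21, e22]
  rw [key]
  exact Matrix.posSemidef_conjTranspose_mul_self _

lemma le_geomMean_of_block (hP : P.PosDef) (hQ : Q.PosDef) (hZ : Z.IsHermitian)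
    (hblk : (fromBlocks P Z Z Q).PosSemidef) : (geomMean P Q - Z).PosSemidef := by
  haveI := hP.isUnit.invertible
  have h0 : (fromBlocks P Z Zᴴ Q).PosSemidef := by rwa [hZ.eq]
  have h1 : (Q - Zᴴ * P⁻¹ * Z).PosSemidef := (Matrix.PosDef.fromBlocks₁₁ Z Q hP).mp h0
  rw [hZ.eq] at h1
  set S := msqrt P with hSdef
  have hSpd := msqrt_posDef hP
  have hd := isUnit_det_of_posDef hSpd
  have hSinvH : (S⁻¹)ᴴ = S⁻¹ := hSpd.1.inv.eq
  have hDpd : (S⁻¹ * Q * S⁻¹).PosDef := sandwich_posDef hQ hP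
  have hWH : (S⁻¹ * Z * S⁻¹).IsHermitian := by
    have := conj_herm_of_herm (hSpd.1.inv) hZ
    exact this
  have h2 : ((S⁻¹)ᴴ * (Q - Z * P⁻¹ * Z) * S⁻¹).PosSemidef :=
    h1.conjTranspose_mul_mul_same S⁻¹
  rw [hSinvH] at h2
  have hsub : S⁻¹ * (Q - Z * P⁻¹ * Z) * S⁻¹
      = S⁻¹ * Q * S⁻¹ - (S⁻¹ * Z * S⁻¹) * (S⁻¹ * Z * S⁻¹) := by
    rw [inv_eq_sqrtinv_mul_sqrtinv hP, ← hSdef, mul_sub, sub_mul]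
    simp only [Matrix.mul_assoc]
  rw [hsub] at h2
  have h3 : (msqrt (S⁻¹ * Q * S⁻¹) - S⁻¹ * Z * S⁻¹).PosSemidef :=
    le_msqrt_of_sq_le hWH hDpd h2
  have h4 := h3.mul_mul_conjTranspose_same S
  rw [hSpd.1.eq] at h4
  have hfin : S * (msqrt (S⁻¹ * Q * S⁻¹) - S⁻¹ * Z * S⁻¹) * S = geomMean P Q - Z := by
    rw [mul_sub, sub_mul, conj_sandwich_cancel hP Z]
    rfl
  rwa [hfin] at h4

lemma fromBlocks_diag_psd {X Y : Matrix n n ℂ} (hX : X.PosSemidef) (hY : Y.PosSemidef) :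
    (fromBlocks X 0 0 Y).PosSemidef := by
  obtain ⟨R, hR⟩ : ∃ R : Matrix n n ℂ, X = Rᴴ * R :=
    ⟨hX.sqrt, by rw [hX.posSemidef_sqrt.1.eq, hX.sqrt_mul_self]⟩
  obtain ⟨R', hR'⟩ : ∃ R : Matrix n n ℂ, Y = Rᴴ * R :=
    ⟨hY.sqrt, by rw [hY.posSemidef_sqrt.1.eq, hY.sqrt_mul_self]⟩
  have key : fromBlocks X 0 0 Y = (fromBlocks R 0 0 R')ᴴ * fromBlocks R 0 0 R' := by
    rw [fromBlocks_conjTranspose, fromBlocks_multiply]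
    simp [hR, hR']
  rw [key]
  exact Matrix.posSemidef_conjTranspose_mul_self _

lemma geomMean_mono {P₁ P₂ Q₁ Q₂ : Matrix n n ℂ} (hP₁ : P₁.PosDef) (hP₂ : P₂.PosDef)
    (hQ₁ : Q₁.PosDef) (hQ₂ : Q₂.PosDef) (h1 : (P₂ - P₁).PosSemidef)
    (h2 : (Q₂ - Q₁).PosSemidef) :
    (geomMean P₂ Q₂ - geomMean P₁ Q₁).PosSemidef := by
  apply le_geomMean_of_block hP₂ hQ₂ (geomMean_herm hP₁ hQ₁)
  have key : fromBlocks P₂ (geomMean P₁ Q₁) (geomMean P₁ Q₁) Q₂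
      = fromBlocks P₁ (geomMean P₁ Q₁) (geomMean P₁ Q₁) Q₁
        + fromBlocks (P₂ - P₁) 0 0 (Q₂ - Q₁) := by
    rw [fromBlocks_add, add_sub_cancel, add_sub_cancel, add_zero]
  rw [key]
  exact (block_geomMean_posSemidef hP₁ hQ₁).add (fromBlocks_diag_psd h1 h2)

lemma psd_trans {X Y Z' : Matrix n n ℂ} (h1 : (Y - X).PosSemidef) (h2 : (Z' - Y).PosSemidef) :
    (Z' - X).PosSemidef := by
  have := h2.add h1
  rwa [sub_add_sub_cancel] at this

end blocks

section kraus

variable {m : Type*} [Fintype m] [DecidableEq m]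

lemma psd_sum {ι : Type*} (s : Finset ι) (f : ι → Matrix m m ℂ)
    (h : ∀ i ∈ s, (f i).PosSemidef) : (∑ i ∈ s, f i).PosSemidef := by
  classical
  induction s using Finset.cons_induction with
  | empty => simpa using Matrix.PosSemidef.zero
  | cons a s ha ih =>
    rw [Finset.sum_cons]
    exact (h a (by simp)).add (ih fun i hi => h i (by simp [hi]))

lemma fromBlocks_sum {ι : Type*} (s : Finset ι) (A B C D : ι → Matrix m m ℂ) :
    ∑ i ∈ s, fromBlocks (A i) (B i) (C i) (D i)
      = fromBlocks (∑ i ∈ s, A i) (∑ i ∈ s, B i) (∑ i ∈ s, C i) (∑ i ∈ s, D i) := by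
  classical
  induction s using Finset.cons_induction with
  | empty => simp [fromBlocks_zero]
  | cons a s ha ih => simp only [Finset.sum_cons, ih, fromBlocks_add]

variable {r : ℕ} (K : Fin r → Matrix n m ℂ)

lemma kraus_psd {X : Matrix n n ℂ} (hX : X.PosSemidef) :
    (∑ i, (K i)ᴴ * X * K i).PosSemidef :=
  psd_sum _ _ fun i _ => hX.conjTranspose_mul_mul_same (K i)

lemma kraus_herm {X : Matrix n n ℂ} (hX : X.IsHermitian) :
    (∑ i, (K i)ᴴ * X * K i).IsHermitian := by
  show _ = _
  rw [Matrix.conjTranspose_sum]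
  exact Finset.sum_congr rfl fun i _ => (Matrix.isHermitian_conjTranspose_mul_mul (K i) hX).eq

lemma kraus_sub (X Y : Matrix n n ℂ) :
    (∑ i, (K i)ᴴ * X * K i) - (∑ i, (K i)ᴴ * Y * K i) = ∑ i, (K i)ᴴ * (X - Y) * K i := by
  rw [← Finset.sum_sub_distrib]
  exact Finset.sum_congr rfl fun i _ => by rw [Matrix.mul_sub, Matrix.sub_mul]

lemma kraus_smul (c : ℂ) (X : Matrix n n ℂ) :
    ∑ i, (K i)ᴴ * (c • X) * K i = c • ∑ i, (K i)ᴴ * X * K i := by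
  rw [Finset.smul_sum]
  exact Finset.sum_congr rfl fun i _ => by
    rw [Matrix.mul_smul, Matrix.smul_mul]

lemma kraus_block {X Y Z : Matrix n n ℂ}
    (hblk : (fromBlocks X Z Z Y).PosSemidef) :
    (fromBlocks (∑ i, (K i)ᴴ * X * K i) (∑ i, (K i)ᴴ * Z * K i)
      (∑ i, (K i)ᴴ * Z * K i) (∑ i, (K i)ᴴ * Y * K i)).PosSemidef := by
  have key : fromBlocks (∑ i, (K i)ᴴ * X * K i) (∑ i, (K i)ᴴ * Z * K i)
      (∑ i, (K i)ᴴ * Z * K i) (∑ i, (K i)ᴴ * Y * K i)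
      = ∑ i, (fromBlocks (K i) 0 0 (K i))ᴴ * fromBlocks X Z Z Y * fromBlocks (K i) 0 0 (K i) := by
    rw [← fromBlocks_sum]
    exact Finset.sum_congr rfl fun i _ => by
      rw [fromBlocks_conjTranspose, fromBlocks_multiply, fromBlocks_multiply]
      simp [Matrix.mul_assoc]
  rw [key]
  exact psd_sum _ _ fun i _ => hblk.conjTranspose_mul_mul_same _

lemma posDef_smul_real {A : Matrix n n ℂ} {ε : ℝ} (hε : 0 < ε) (hA : A.PosDef) :
    ((ε : ℂ) • A).PosDef := by
  refine Matrix.PosDef.of_dotProduct_mulVec_pos ?_ (fun x hx => ?_)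
  · show _ = _
    rw [Matrix.conjTranspose_smul, hA.1.eq]
    congr 1
    simp
  · rw [Matrix.smul_mulVec, dotProduct_smul]
    have := hA.dotProduct_mulVec_pos hx
    rw [show ((ε : ℂ)) • (star x ⬝ᵥ A *ᵥ x) = ((ε:ℂ)) * (star x ⬝ᵥ A *ᵥ x) from rfl]
    exact mul_pos (by exact_mod_cast Complex.zero_lt_real.mpr hε) this

lemma exists_eps {G A : Matrix n n ℂ} (hG : G.PosDef) (hA : A.PosDef) :
    ∃ ε : ℝ, 0 < ε ∧ (G - (ε : ℂ) • A).PosSemidef := by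
  set S := msqrt A with hSdef
  have hSpd := msqrt_posDef hA
  have hH : (S⁻¹ * G * S⁻¹).PosDef := sandwich_posDef hG hA
  rcases isEmpty_or_nonempty n with hn | hn
  · refine ⟨1, one_pos, ⟨by ext i j; exact (IsEmpty.false i).elim, fun x => ?_⟩⟩
    have hx : x = 0 := Finsupp.ext fun i => (IsEmpty.false i).elim
    simp [hx]
  · set ε := Finset.univ.inf' Finset.univ_nonempty hH.1.eigenvalues with hε
    have hεpos : 0 < ε := by
      obtain ⟨i, -, hi⟩ := Finset.exists_mem_eq_inf' Finset.univ_nonempty hH.1.eigenvalues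
      rw [hε, hi]
      exact hH.eigenvalues_pos i
    have hle : ∀ i, ε ≤ hH.1.eigenvalues i := fun i =>
      Finset.inf'_le _ (Finset.mem_univ i)
    have hpsd : (S⁻¹ * G * S⁻¹ - (ε : ℂ) • 1).PosSemidef := sub_smul_one_psd hH.1 hle
    refine ⟨ε, hεpos, ?_⟩
    have h4 := hpsd.mul_mul_conjTranspose_same S
    rw [hSpd.1.eq] at h4
    have e : S * (S⁻¹ * G * S⁻¹ - (ε : ℂ) • 1) * S = G - (ε : ℂ) • A := by
      rw [mul_sub, sub_mul, conj_sandwich_cancel hA G]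
      congr 1
      rw [mul_smul_comm, smul_mul_assoc, mul_one, msqrt_mul_self hA.posSemidef]
    rwa [e] at h4
  
lemma kraus_posDef {G A : Matrix n n ℂ} (hG : G.PosDef) (hA : A.PosDef)
    (hΦA : (∑ i, (K i)ᴴ * A * K i).PosDef) : (∑ i, (K i)ᴴ * G * K i).PosDef := by
  obtain ⟨ε, hε, hpsd⟩ := exists_eps hG hA
  have h1 : ((∑ i, (K i)ᴴ * G * K i) - (ε : ℂ) • (∑ i, (K i)ᴴ * A * K i)).PosSemidef := by
    rw [← kraus_smul K, kraus_sub K]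
    exact kraus_psd K hpsd
  have := (posDef_smul_real hε hΦA).add_posSemidef h1
  rwa [add_sub_cancel] at this

lemma cp_geomMean_step {X Y : Matrix n n ℂ} (hX : X.PosDef) (hY : Y.PosDef)
    (hΦX : (∑ i, (K i)ᴴ * X * K i).PosDef) (hΦY : (∑ i, (K i)ᴴ * Y * K i).PosDef) :
    (geomMean (∑ i, (K i)ᴴ * X * K i) (∑ i, (K i)ᴴ * Y * K i)
      - ∑ i, (K i)ᴴ * geomMean X Y * K i).PosSemidef :=
  le_geomMean_of_block hΦX hΦY (kraus_herm K (geomMean_herm hX hY))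
    (kraus_block K (block_geomMean_posSemidef hX hY))

end kraus

section dyadic

variable {m : Type*} [Fintype m] [DecidableEq m] {r : ℕ}

/-- Abbreviation for the Kraus-form map. -/
noncomputable def Phi (K : Fin r → Matrix n m ℂ) (X : Matrix n n ℂ) : Matrix m m ℂ :=
  ∑ i, (K i)ᴴ * X * K i

variable (K : Fin r → Matrix n m ℂ) {A B : Matrix n n ℂ}

lemma good_step (hA : A.PosDef) (hB : B.PosDef) (hΦA : (Phi K A).PosDef)
    (hΦB : (Phi K B).PosDef) {β γ : ℝ}
    (hβ : (wgeomMean β (Phi K A) (Phi K B) - Phi K (wgeomMean β A B)).PosSemidef)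
    (hγ : (wgeomMean γ (Phi K A) (Phi K B) - Phi K (wgeomMean γ A B)).PosSemidef) :
    (wgeomMean ((β + γ)/2) (Phi K A) (Phi K B)
      - Phi K (wgeomMean ((β + γ)/2) A B)).PosSemidef := by
  have hGβ := wgeom_posDef hA hB β
  have hGγ := wgeom_posDef hA hB γ
  have hGβ' := wgeom_posDef hΦA hΦB β
  have hGγ' := wgeom_posDef hΦA hΦB γ
  have hΦGβ : (Phi K (wgeomMean β A B)).PosDef := kraus_posDef K hGβ hA hΦA
  have hΦGγ : (Phi K (wgeomMean γ A B)).PosDef := kraus_posDef K hGγ hA hΦA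
  rw [wgeom_midpoint hA hB β γ, wgeom_midpoint hΦA hΦB β γ]
  have step1 : (geomMean (Phi K (wgeomMean β A B)) (Phi K (wgeomMean γ A B))
      - Phi K (geomMean (wgeomMean β A B) (wgeomMean γ A B))).PosSemidef :=
    cp_geomMean_step K hGβ hGγ hΦGβ hΦGγ
  have step2 : (geomMean (wgeomMean β (Phi K A) (Phi K B)) (wgeomMean γ (Phi K A) (Phi K B))
      - geomMean (Phi K (wgeomMean β A B)) (Phi K (wgeomMean γ A B))).PosSemidef :=
    geomMean_mono hΦGβ hGβ' hΦGγ hGγ' hβ hγ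
  exact psd_trans step1 step2

lemma good_dyadic (hA : A.PosDef) (hB : B.PosDef) (hΦA : (Phi K A).PosDef)
    (hΦB : (Phi K B).PosDef) :
    ∀ (j k : ℕ), k ≤ 2^j →
      (wgeomMean ((k : ℝ)/2^j) (Phi K A) (Phi K B)
        - Phi K (wgeomMean ((k : ℝ)/2^j) A B)).PosSemidef := by
  intro j
  induction j with
  | zero =>
    intro k hk
    interval_cases k
    · have e : ((0 : ℕ) : ℝ)/2^0 = 0 := by norm_num
      rw [e, wgeom_zero hA hB, wgeom_zero hΦA hΦB, sub_self]
      exact Matrix.PosSemidef.zero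
    · have e : ((1 : ℕ) : ℝ)/2^0 = 1 := by norm_num
      rw [e, wgeom_one hA hB, wgeom_one hΦA hΦB, sub_self]
      exact Matrix.PosSemidef.zero
  | succ j ih =>
    intro k hk
    have h2 : (2:ℕ)^(j+1) = 2 * 2^j := by ring
    rcases Nat.even_or_odd k with ⟨t, rfl⟩ | ⟨t, rfl⟩
    · have ht : t ≤ 2^j := by omega
      have e : ((t + t : ℕ) : ℝ)/2^(j+1) = (t : ℝ)/2^j := by
        push_cast
        have : (2:ℝ)^(j+1) = 2 * 2^j := by ring
        rw [this]
        field_simp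
        ring
      rw [e]
      exact ih t ht
    · have ht1 : t ≤ 2^j := by omega
      have ht2 : t + 1 ≤ 2^j := by omega
      have e : ((2*t + 1 : ℕ) : ℝ)/2^(j+1) = ((t : ℝ)/2^j + ((t+1 : ℕ) : ℝ)/2^j)/2 := by
        push_cast
        have : (2:ℝ)^(j+1) = 2 * 2^j := by ring
        rw [this]
        field_simp
        ring
      rw [e]
      exact good_step K hA hB hΦA hΦB (ih t ht1) (ih (t+1) ht2)

end dyadic

section limit

open Filter Topology

lemma mrpow_continuous {C : Matrix n n ℂ} (hC : C.PosDef) :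
    Continuous fun α : ℝ => mrpow C α := by
  have key : (fun α : ℝ => mrpow C α)
      = fun α => (hC.1.eigenvectorUnitary : Matrix n n ℂ)
        * diagonal (RCLike.ofReal ∘ (fun t => t ^ α) ∘ hC.1.eigenvalues)
        * (star hC.1.eigenvectorUnitary : Matrix n n ℂ) :=
    funext fun α => by rw [mrpow_eq hC.1, Matrix.IsHermitian.cfc, Unitary.conjStarAlgAut_apply]
  rw [key]
  refine (continuous_const.matrix_mul ?_).matrix_mul continuous_const
  refine Continuous.matrix_diagonal ?_
  refine continuous_pi fun i => ?_
  have h1 : Continuous fun α : ℝ => (hC.1.eigenvalues i) ^ α :=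
    continuous_iff_continuousAt.mpr fun α =>
      Real.continuousAt_const_rpow (hC.eigenvalues_pos i).ne'
  exact Complex.continuous_ofReal.comp h1

lemma posSemidef_of_tendsto {m' : Type*} [Fintype m'] {f : ℕ → Matrix m' m' ℂ}
    {L : Matrix m' m' ℂ} (h : Tendsto f atTop (nhds L)) (hf : ∀ j, (f j).PosSemidef) :
    L.PosSemidef := by
  refine Matrix.PosSemidef.of_dotProduct_mulVec_nonneg ?_ ?_
  · have hct : Continuous fun M : Matrix m' m' ℂ => Mᴴ := continuous_id.matrix_conjTranspose
    have h2 : Tendsto (fun j => (f j)ᴴ) atTop (nhds Lᴴ) := (hct.tendsto L).comp h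
    have h3 : (fun j => (f j)ᴴ) = f := funext fun j => (hf j).1
    rw [h3] at h2
    exact tendsto_nhds_unique h2 h
  · intro x
    have hct : Continuous fun M : Matrix m' m' ℂ => star x ⬝ᵥ M *ᵥ x :=
      continuous_const.dotProduct (continuous_id.matrix_mulVec continuous_const)
    have h2 : Tendsto (fun j => star x ⬝ᵥ (f j) *ᵥ x) atTop (nhds (star x ⬝ᵥ L *ᵥ x)) :=
      (hct.tendsto L).comp h
    have hre : Tendsto (fun j => (star x ⬝ᵥ (f j) *ᵥ x).re) atTop
        (nhds ((star x ⬝ᵥ L *ᵥ x).re)) := (Complex.continuous_re.tendsto _).comp h2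
    have him : Tendsto (fun j => (star x ⬝ᵥ (f j) *ᵥ x).im) atTop
        (nhds ((star x ⬝ᵥ L *ᵥ x).im)) := (Complex.continuous_im.tendsto _).comp h2
    have hj : ∀ j, 0 ≤ (star x ⬝ᵥ (f j) *ᵥ x).re ∧ (star x ⬝ᵥ (f j) *ᵥ x).im = 0 := by
      intro j
      have := (hf j).dotProduct_mulVec_nonneg x
      rw [Complex.le_def] at this
      exact ⟨by simpa using this.1, by simpa using this.2.symm⟩
    have h0re : 0 ≤ (star x ⬝ᵥ L *ᵥ x).re :=
      ge_of_tendsto hre (Filter.Eventually.of_forall fun j => (hj j).1)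
    have h0im : (star x ⬝ᵥ L *ᵥ x).im = 0 := by
      have him' : Tendsto (fun _ : ℕ => (0:ℝ)) atTop (nhds ((star x ⬝ᵥ L *ᵥ x).im)) := by
        have : (fun j => (star x ⬝ᵥ (f j) *ᵥ x).im) = fun _ => (0:ℝ) :=
          funext fun j => (hj j).2
        rwa [this] at him
      exact tendsto_nhds_unique him' tendsto_const_nhds
    rw [Complex.le_def]
    exact ⟨by simpa using h0re, by simp [h0im]⟩

lemma tendsto_dyadic {α : ℝ} (hα0 : 0 ≤ α) :
    Tendsto (fun j : ℕ => ((⌊α * 2^j⌋₊ : ℕ) : ℝ)/2^j) atTop (nhds α) := by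
  have hlow : ∀ j : ℕ, α - (1/2 : ℝ)^j ≤ ((⌊α * 2^j⌋₊ : ℕ) : ℝ)/2^j := by
    intro j
    have hpos : (0:ℝ) < 2^j := by positivity
    have h1 : α * 2^j - 1 < ((⌊α * 2^j⌋₊ : ℕ) : ℝ) := Nat.sub_one_lt_floor _
    have e : (1/2:ℝ)^j = 1/2^j := by rw [div_pow, one_pow]
    rw [e, sub_le_iff_le_add, ← add_div, le_div_iff₀ hpos]
    linarith [h1]
  have hhigh : ∀ j : ℕ, ((⌊α * 2^j⌋₊ : ℕ) : ℝ)/2^j ≤ α := by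
    intro j
    have hpos : (0:ℝ) < 2^j := by positivity
    rw [div_le_iff₀ hpos]
    exact Nat.floor_le (by positivity)
  have hl : Tendsto (fun j : ℕ => α - (1/2 : ℝ)^j) atTop (nhds α) := by
    have h0 : Tendsto (fun j : ℕ => (1/2 : ℝ)^j) atTop (nhds 0) :=
      tendsto_pow_atTop_nhds_zero_of_lt_one (by norm_num) (by norm_num)
    have := tendsto_const_nhds.sub h0 (f := fun _ : ℕ => α)
    simpa using this
  exact tendsto_of_tendsto_of_tendsto_of_le_of_le hl tendsto_const_nhds hlow hhigh

end limit

end CPAux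

open CPAux in
/-- `Φ(G_α(A,B)) ≤ G_α(Φ(A), Φ(B))` for a completely positive map `Φ` and `α ∈ [0,1]`. -/
theorem cp_weighted_geomMean {n m : Type*} [Fintype n] [DecidableEq n] [Fintype m] [DecidableEq m]
    (Φ : Matrix n n ℂ → Matrix m m ℂ) (hΦ : IsCPMap Φ)
    (α : ℝ) (hα0 : 0 ≤ α) (hα1 : α ≤ 1)
    (A B : Matrix n n ℂ) (hA : A.PosDef) (hB : B.PosDef)
    (hΦA : (Φ A).PosDef) (hΦB : (Φ B).PosDef) :
    (wgeomMean α (Φ A) (Φ B) - Φ (wgeomMean α A B)).PosSemidef := by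
  obtain ⟨r, K, hK⟩ := hΦ
  have hΦA' : (Phi K A).PosDef := by unfold Phi; rw [← hK]; exact hΦA
  have hΦB' : (Phi K B).PosDef := by unfold Phi; rw [← hK]; exact hΦB
  set F : ℝ → Matrix m m ℂ :=
    fun t => wgeomMean t (Phi K A) (Phi K B) - Phi K (wgeomMean t A B) with hF
  have hgoal : wgeomMean α (Φ A) (Φ B) - Φ (wgeomMean α A B) = F α := by
    rw [hF, hK, hK, hK]
    rfl
  rw [hgoal]
  have hC1 : ((msqrt B)⁻¹ * A * (msqrt B)⁻¹).PosDef := sandwich_posDef hA hB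
  have hC2 : ((msqrt (Phi K B))⁻¹ * (Phi K A) * (msqrt (Phi K B))⁻¹).PosDef :=
    sandwich_posDef hΦA' hΦB'
  have hcont : Continuous F := by
    have e : F = fun t =>
        msqrt (Phi K B) * mrpow ((msqrt (Phi K B))⁻¹ * (Phi K A) * (msqrt (Phi K B))⁻¹) t
          * msqrt (Phi K B)
        - ∑ i, (K i)ᴴ * (msqrt B * mrpow ((msqrt B)⁻¹ * A * (msqrt B)⁻¹) t * msqrt B) * K i :=
      rfl
    rw [e]
    refine Continuous.sub ?_ ?_
    · exact (continuous_const.matrix_mul (mrpow_continuous hC2)).matrix_mul continuous_const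
    · refine continuous_finset_sum _ fun i _ => ?_
      exact (continuous_const.matrix_mul
        ((continuous_const.matrix_mul (mrpow_continuous hC1)).matrix_mul
          continuous_const)).matrix_mul continuous_const
  have hqk : ∀ j : ℕ, ⌊α * 2^j⌋₊ ≤ 2^j := by
    intro j
    have h1 : α * 2^j ≤ (((2:ℕ)^j : ℕ) : ℝ) := by
      push_cast
      nlinarith [pow_pos (show (0:ℝ) < 2 by norm_num) j]
    exact (Nat.floor_le_of_le h1).trans (by simp)
  have hgood : ∀ j : ℕ, (F (((⌊α * 2^j⌋₊ : ℕ) : ℝ)/2^j)).PosSemidef := fun j =>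
    good_dyadic K hA hB hΦA' hΦB' j ⌊α * 2^j⌋₊ (hqk j)
  have htend : Filter.Tendsto (fun j : ℕ => F (((⌊α * 2^j⌋₊ : ℕ) : ℝ)/2^j))
      Filter.atTop (nhds (F α)) := (hcont.tendsto α).comp (tendsto_dyadic hα0)
  exact posSemidef_of_tendsto htend hgood
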